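/- arXiv:1610.07827 — 2 statements merged into one kernel-verified Lean document; each statement's English description precedes it below -/
import Mathlib

section
/- Let k be a field of characteristic zero and n ≥ 1. Consider the map α sending a tuple (a1,…,an) ∈ k^n with a1 ≠ 0 to the endomorphism of k[y1,…,yn] defined by yⱼ ↦ Σ over tuples (l1,…,lj) ∈ ℕ₀^j with Σ_i i·l_i = j of (|l|!/∏_i l_i!)·a_{|l|}·∏_i y_i^{l_i}, where |l| = Σ_i l_i. Then each such endomorphism is triangular (the image of yⱼ lies in k[y1,…,yⱼ]) with diagonal coefficient a1 on yⱼ, and hence is a k-algebra automorphism of k[y1,…,yn]. -/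
open MvPolynomial

/-- The coordinate polynomials of the map `α(a)`: writing the variables of `k[y₁,…,y_n]` as
`X 0, …, X (n-1)` (so `X j` is `y_{j+1}`), the image of `y_{j+1}` is
`∑_{(l₁,…,l_{j+1}) ∈ ℕ₀^{j+1}, ∑ i·lᵢ = j+1} (|l|!/∏ lᵢ!) · a_{|l|} · ∏ yᵢ^{lᵢ}`, where
`|l| = ∑ lᵢ` and `a_r` denotes the `r`-th coefficient. (Each `lᵢ ≤ j+1`, so the tuples
are indexed by functions `Fin (j+1) → Fin (j+2)`.) -/
noncomputable def alphaPoly {k : Type*} [Field k] (n : ℕ) (a : ℕ → k) (j : Fin n) :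
    MvPolynomial (Fin n) k :=
  ∑ l ∈ Finset.univ.filter
      (fun l : Fin (j.1 + 1) → Fin (j.1 + 2) => ∑ i, (i.1 + 1) * (l i).1 = j.1 + 1),
    C (((∑ i, (l i).1).factorial : k) / (∏ i, ((l i).1.factorial : k)) * a (∑ i, (l i).1)) *
      ∏ i, (X (⟨i.1, by omega⟩ : Fin n)) ^ (l i).1

section Aux

variable {k : Type*} [Field k]

/-- aeval agrees on supported polynomials if functions agree on the support set. -/
lemma aeval_congr_supported {σ : Type*} {s : Set σ} {p : MvPolynomial σ k}
    (hp : p ∈ supported k s) {A : Type*} [CommRing A] [Algebra k A]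
    {f g : σ → A} (h : ∀ i ∈ s, f i = g i) : aeval f p = aeval g p := by
  have hv : (↑p.vars : Set σ) ⊆ s := (mem_supported).mp hp
  classical
  simp only [aeval_def, ← coe_eval₂Hom]
  exact eval₂Hom_congr' rfl (fun i hi _ => h i (hv hi)) rfl

variable (n : ℕ) (a : ℕ → k)

/-- the distinguished index tuple : all zero except 1 at the last slot -/
def lone (j : Fin n) : Fin (j.1 + 1) → Fin (j.1 + 2) :=
  fun i => if i = Fin.last j.1 then 1 else 0

/-- the lower-order part of `alphaPoly` -/
noncomputable def restPoly (j : Fin n) : MvPolynomial (Fin n) k :=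
  ∑ l ∈ (Finset.univ.filter
      (fun l : Fin (j.1 + 1) → Fin (j.1 + 2) => ∑ i, (i.1 + 1) * (l i).1 = j.1 + 1)).erase
      (lone n j),
    C (((∑ i, (l i).1).factorial : k) / (∏ i, ((l i).1.factorial : k)) * a (∑ i, (l i).1)) *
      ∏ i, (X (⟨i.1, by omega⟩ : Fin n)) ^ (l i).1

lemma lone_mem (j : Fin n) : lone n j ∈ Finset.univ.filter
    (fun l : Fin (j.1 + 1) → Fin (j.1 + 2) => ∑ i, (i.1 + 1) * (l i).1 = j.1 + 1) := by
  simp only [Finset.mem_filter, Finset.mem_univ, true_and]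
  rw [Fin.sum_univ_castSucc]
  have h1 : ∀ i : Fin j.1, (lone n j i.castSucc).1 = 0 := by
    intro i
    simp [lone, (Fin.castSucc_lt_last i).ne]
  have h2 : (lone n j (Fin.last j.1)).1 = 1 := by simp [lone]
  simp [h1, h2]

lemma last_eq_zero (j : Fin n) (l : Fin (j.1 + 1) → Fin (j.1 + 2))
    (hl : ∑ i, (i.1 + 1) * (l i).1 = j.1 + 1) (hne : l ≠ lone n j) :
    (l (Fin.last j.1)).1 = 0 := by
  by_contra hm
  rw [Fin.sum_univ_castSucc] at hl
  simp only [Fin.val_last] at hl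
  have hS : ∑ i : Fin j.1, (i.castSucc.1 + 1) * (l i.castSucc).1 = 0 ∧
      (l (Fin.last j.1)).1 = 1 := by
    constructor <;> nlinarith [Nat.one_le_iff_ne_zero.mpr hm,
      Nat.zero_le (∑ i : Fin j.1, (i.castSucc.1 + 1) * (l i.castSucc).1)]
  apply hne
  funext i
  refine Fin.lastCases ?_ ?_ i
  · have h2 := hS.2
    simp only [lone, if_pos rfl]
    exact Fin.ext (by simpa using h2)
  · intro i
    have h1 := hS.1
    rw [Finset.sum_eq_zero_iff] at h1
    have := h1 i (Finset.mem_univ i)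
    have hz : (l i.castSucc).1 = 0 := by
      rcases Nat.mul_eq_zero.mp this with h | h
      · omega
      · exact h
    simp only [lone, if_neg (Fin.castSucc_lt_last i).ne]
    exact Fin.ext (by simpa using hz)

lemma alpha_decomp (j : Fin n) :
    alphaPoly n a j = C (a 1) * X j + restPoly n a j := by
  rw [alphaPoly, restPoly, ← Finset.add_sum_erase _ _ (lone_mem n j)]
  congr 1
  have hsum : ∑ i, (lone n j i).1 = 1 := by
    rw [Fin.sum_univ_castSucc]
    have h1 : ∀ i : Fin j.1, (lone n j i.castSucc).1 = 0 := fun i => by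
      simp [lone, (Fin.castSucc_lt_last i).ne]
    have h2 : (lone n j (Fin.last j.1)).1 = 1 := by simp [lone]
    simp [h1, h2]
  have hprod : ∏ i, (((lone n j i).1.factorial : k)) = 1 := by
    apply Finset.prod_eq_one
    intro i _
    by_cases h : i = Fin.last j.1 <;> simp [lone, h]
  have hX : ∏ i : Fin (j.1+1), (X (⟨i.1, by omega⟩ : Fin n) : MvPolynomial (Fin n) k)
      ^ (lone n j i).1 = X j := by
    rw [Fin.prod_univ_castSucc]
    have h1 : ∀ i : Fin j.1,
        (X (⟨i.castSucc.1, by omega⟩ : Fin n) : MvPolynomial (Fin n) k)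
          ^ (lone n j i.castSucc).1 = 1 := fun i => by
      simp [lone, (Fin.castSucc_lt_last i).ne]
    simp only [h1, Finset.prod_const_one, one_mul]
    have h2 : (lone n j (Fin.last j.1)).1 = 1 := by simp [lone]
    rw [h2, pow_one]
    exact congrArg X (Fin.ext rfl)
  rw [hsum, hprod, hX]
  norm_num

lemma restPoly_mem (j : Fin n) :
    restPoly n a j ∈ supported k {i : Fin n | i < j} := by
  apply Subalgebra.sum_mem
  intro l hl
  rw [Finset.mem_erase, Finset.mem_filter] at hl
  have hlast : (l (Fin.last j.1)).1 = 0 := last_eq_zero n j l hl.2.2 hl.1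
  apply Subalgebra.mul_mem
  · exact Subalgebra.algebraMap_mem _ _
  · apply Subalgebra.prod_mem
    intro i _
    by_cases h : i = Fin.last j.1
    · rw [h, hlast, pow_zero]; exact Subalgebra.one_mem _
    · apply Subalgebra.pow_mem
      rw [X_mem_supported]
      exact lt_of_lt_of_le (Fin.val_lt_last h) (le_refl j.1)

noncomputable def qfun : Fin n → MvPolynomial (Fin n) k
  | j => C (a 1)⁻¹ * (X j -
      aeval (fun i : Fin n => if _h : i < j then qfun i else 0) (restPoly n a j))
termination_by j => j.1
decreasing_by exact _h

lemma qfun_spec (j : Fin n) :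
    qfun n a j = C (a 1)⁻¹ * (X j - aeval (qfun n a) (restPoly n a j)) := by
  have h := aeval_congr_supported (restPoly_mem n a j)
    (f := fun i : Fin n => if _h : i < j then qfun n a i else 0) (g := qfun n a)
    (fun i hi => dif_pos hi)
  rw [qfun, h]

lemma aeval_q_alpha (ha : a 1 ≠ 0) (j : Fin n) :
    aeval (qfun n a) (alphaPoly n a j) = X j := by
  rw [alpha_decomp, map_add, map_mul, aeval_C, aeval_X, qfun_spec,
    MvPolynomial.algebraMap_eq, ← mul_assoc, ← C_mul, mul_inv_cancel₀ ha, C_1, one_mul]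
  ring

lemma aeval_alpha_q (ha : a 1 ≠ 0) : ∀ (m : ℕ) (j : Fin n), j.1 < m →
    aeval (alphaPoly n a) (qfun n a j) = X j := by
  intro m
  induction m with
  | zero => intro j hj; omega
  | succ m ih =>
    intro j hj
    have hcomp : aeval (alphaPoly n a) (aeval (qfun n a) (restPoly n a j)) =
        aeval (fun i => aeval (alphaPoly n a) (qfun n a i)) (restPoly n a j) := by
      rw [← AlgHom.comp_apply, comp_aeval]
    have hcongr := aeval_congr_supported (restPoly_mem n a j)
      (f := fun i => aeval (alphaPoly n a) (qfun n a i)) (g := X)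
      (fun i hi => ih i (by have : i.1 < j.1 := hi; omega))
    rw [qfun_spec, map_mul, map_sub, aeval_C, aeval_X, hcomp, hcongr,
      aeval_X_left_apply, alpha_decomp, MvPolynomial.algebraMap_eq,
      add_sub_cancel_right, ← mul_assoc, ← C_mul, inv_mul_cancel₀ ha, C_1, one_mul]

end Aux

/-- For `k` a field of characteristic zero, `n ≥ 1` and `(a₁,…,a_n)` with
`a₁ ≠ 0`, the endomorphism `α(a)` of `k[y₁,…,y_n]` given by the universal formula is
triangular — the image of `yⱼ` involves only `y₁,…,yⱼ`, with coefficient `a₁` on `yⱼ` —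
and is a `k`-algebra automorphism. -/
theorem stmt13 (k : Type*) [Field k] [CharZero k] (n : ℕ) (hn : 1 ≤ n)
    (a : ℕ → k) (ha : a 1 ≠ 0) :
    (∀ j : Fin n, alphaPoly n a j ∈ MvPolynomial.supported k {i : Fin n | i ≤ j}) ∧
    (∀ j : Fin n, MvPolynomial.coeff (Finsupp.single j 1) (alphaPoly n a j) = a 1) ∧
    Function.Bijective
      (MvPolynomial.aeval (alphaPoly n a) :
        MvPolynomial (Fin n) k →ₐ[k] MvPolynomial (Fin n) k) := by
  refine ⟨?_, ?_, ?_⟩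
  · intro j
    rw [alpha_decomp]
    apply Subalgebra.add_mem
    · apply Subalgebra.mul_mem
      · exact Subalgebra.algebraMap_mem _ _
      · rw [X_mem_supported]; exact le_refl j
    · exact supported_mono (fun i (hi : i < j) => le_of_lt hi) (restPoly_mem n a j)
  · intro j
    rw [alpha_decomp, coeff_add, coeff_C_mul, coeff_X]
    have h0 : coeff (Finsupp.single j 1) (restPoly n a j) = 0 := by
      by_contra h
      have hjv : j ∈ (restPoly n a j).vars := by
        rw [mem_vars]
        exact ⟨Finsupp.single j 1, MvPolynomial.mem_support_iff.mpr h,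
          Finsupp.mem_support_iff.mpr (by simp)⟩
      have := (mem_supported.mp (restPoly_mem n a j)) hjv
      exact absurd this (lt_irrefl j)
    rw [h0, if_pos rfl, mul_one, add_zero]
  · have h1 : ∀ x, aeval (qfun n a) (aeval (alphaPoly n a) x) = x := by
      intro x
      have : (aeval (qfun n a)).comp (aeval (alphaPoly n a)) =
          AlgHom.id k (MvPolynomial (Fin n) k) := by
        apply algHom_ext
        intro i
        rw [AlgHom.comp_apply, aeval_X, AlgHom.id_apply]
        exact aeval_q_alpha n a ha i
      exact congrArg (fun f => f x) (congrArg DFunLike.coe this)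
    have h2 : ∀ x, aeval (alphaPoly n a) (aeval (qfun n a) x) = x := by
      intro x
      have : (aeval (alphaPoly n a)).comp (aeval (qfun n a)) =
          AlgHom.id k (MvPolynomial (Fin n) k) := by
        apply algHom_ext
        intro i
        rw [AlgHom.comp_apply, aeval_X, AlgHom.id_apply]
        exact aeval_alpha_q n a ha (i.1 + 1) i (Nat.lt_succ_self _)
      exact congrArg (fun f => f x) (congrArg DFunLike.coe this)
    exact ⟨Function.LeftInverse.injective h1, fun x => ⟨aeval (qfun n a) x, h2 x⟩⟩
end

section
/- Let k be a field of characteristic zero, n ≥ 1, and for a = (a1,…,an) ∈ k^n with a1 ≠ 0 let F_a(x) = Σ_{r=1}^n a_r x^r ∈ k[[x]], and define α(a) : k[y1,…,yn] → k[y1,…,yn] by α(a)(yⱼ) = Σ_{(l1,…,lj), Σ i·l_i = j} (|l|!/∏ l_i!)·a_{|l|}·∏ y_i^{l_i}. Then α is a group homomorphism: if F_c ≡ F_a ∘ F_b mod x^{n+1} (composition of power series, truncated), then α(c) = α(a) ∘ α(b) as endomorphisms of k[y1,…,yn]. -/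
open MvPolynomial

section Helpers
open Finset
lemma restrict_prod {M : Type*} [CommMonoid M] {n N : ℕ} (h : N ≤ n) (F : Fin n → M)
    (hF : ∀ i : Fin n, N ≤ i.1 → F i = 1) :
    ∏ i : Fin n, F i = ∏ i : Fin N, F (Fin.castLE h i) := by
  have h1 : ∏ i : Fin N, F (Fin.castLE h i) = ∏ i ∈ Finset.univ.map (Fin.castLEEmb h), F i := by
    rw [Finset.prod_map]; rfl
  rw [h1]
  refine (Finset.prod_subset (Finset.subset_univ _) ?_).symm
  intro i _ hi
  refine hF i ?_
  by_contra hlt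
  exact hi (by simp [Fin.castLEEmb]; exact ⟨⟨i.1, by omega⟩, by ext; rfl⟩)

lemma restrict_sum {M : Type*} [AddCommMonoid M] {n N : ℕ} (h : N ≤ n) (F : Fin n → M)
    (hF : ∀ i : Fin n, N ≤ i.1 → F i = 0) :
    ∑ i : Fin n, F i = ∑ i : Fin N, F (Fin.castLE h i) :=
  restrict_prod (M := Multiplicative M) h F hF

lemma aeval_sub_dvd {R A : Type*} [CommRing R] [CommRing A] [Algebra R A] (P Q : A)
    (F : Polynomial R) : (P - Q) ∣ Polynomial.aeval P F - Polynomial.aeval Q F := by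
  induction F using Polynomial.induction_on' with
  | add p q hp hq =>
      have := dvd_add hp hq
      convert this using 1
      simp only [map_add]; ring
  | monomial m c =>
      simp only [Polynomial.aeval_monomial, ← mul_sub]
      exact Dvd.dvd.mul_left (sub_dvd_pow_sub_pow P Q m) _

noncomputable def Ypoly (k : Type*) [Field k] (n : ℕ) : Polynomial (MvPolynomial (Fin n) k) :=
  ∑ i : Fin n, Polynomial.C (X i) * Polynomial.X ^ (i.1 + 1)

lemma Ypoly_coeff_zero (k : Type*) [Field k] (n : ℕ) : (Ypoly k n).coeff 0 = 0 := by
  simp [Ypoly, Polynomial.finset_sum_coeff, Polynomial.coeff_X_pow]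

lemma Ypow_coeff (k : Type*) [Field k] (n : ℕ) (m d : ℕ) :
    (Ypoly k n ^ m).coeff d = ∑ l ∈ (Finset.piAntidiag (univ : Finset (Fin n)) m).filter
      (fun l => ∑ i, (i.1 + 1) * l i = d),
      (Nat.multinomial univ l : MvPolynomial (Fin n) k) * ∏ i, X i ^ l i := by
  classical
  rw [Ypoly, Finset.sum_pow_eq_sum_piAntidiag, Polynomial.finset_sum_coeff, Finset.sum_filter]
  refine Finset.sum_congr rfl fun l hl => ?_
  have hprod : ∏ i : Fin n, (Polynomial.C (X i : MvPolynomial (Fin n) k) * Polynomial.X ^ (i.1 + 1)) ^ l i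
      = Polynomial.C (∏ i, (X i : MvPolynomial (Fin n) k) ^ l i) * Polynomial.X ^ (∑ i, (i.1 + 1) * l i) := by
    simp only [mul_pow, ← map_pow, ← pow_mul]
    rw [Finset.prod_mul_distrib, map_prod, Finset.prod_pow_eq_pow_sum]
  rw [hprod, ← mul_assoc, ← map_natCast (Polynomial.C (R := MvPolynomial (Fin n) k)),
    ← map_mul, Polynomial.coeff_C_mul, Polynomial.coeff_X_pow]
  by_cases h : ∑ i, (i.1 + 1) * l i = d
  · simp [h]
  · simp [h, Ne.symm h]

end Helpers

/-- The truncated power series `F_a = ∑_{r=1}^n a_r x^r`, as a polynomial. -/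
noncomputable def Ftrunc {k : Type*} [Field k] (n : ℕ) (a : ℕ → k) : Polynomial k :=
  ∑ r ∈ Finset.range n, Polynomial.C (a (r + 1)) * Polynomial.X ^ (r + 1)

section Helpers2
open Finset
lemma coeff_aeval_Y (k : Type*) [Field k] [CharZero k] (n : ℕ) (a : ℕ → k) (j : Fin n) :
    (Polynomial.aeval (Ypoly k n) (Ftrunc n a)).coeff (j.1 + 1) = alphaPoly n a j := by
  classical
  have hjn : j.1 + 1 ≤ n := j.2
  rw [Ftrunc, map_sum, Polynomial.finset_sum_coeff]
  have hterm : ∀ r, ((Polynomial.aeval (Ypoly k n))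
        (Polynomial.C (a (r + 1)) * Polynomial.X ^ (r + 1))).coeff (j.1 + 1)
      = ∑ l ∈ (Finset.piAntidiag (univ : Finset (Fin n)) (r + 1)).filter
          (fun l => ∑ i, (i.1 + 1) * l i = j.1 + 1),
        C (a (r + 1)) * ((Nat.multinomial univ l : MvPolynomial (Fin n) k) * ∏ i, X i ^ l i) := by
    intro r
    rw [map_mul, Polynomial.aeval_C, map_pow, Polynomial.aeval_X]
    rw [show (algebraMap k (Polynomial (MvPolynomial (Fin n) k))) (a (r + 1))
        = Polynomial.C (C (a (r + 1))) from rfl]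
    rw [Polynomial.coeff_C_mul, Ypow_coeff, Finset.mul_sum]
  rw [Finset.sum_congr rfl fun r _ => hterm r, Finset.sum_sigma', alphaPoly]
  refine Finset.sum_nbij'
    (i := fun p i => (⟨min (p.2 (Fin.castLE hjn i)) (j.1 + 1), by omega⟩ : Fin (j.1 + 2)))
    (j := fun l => ⟨(∑ i, (l i).1) - 1,
      fun i => if h : i.1 < j.1 + 1 then (l ⟨i.1, h⟩).1 else 0⟩)
    ?_ ?_ ?_ ?_ ?_
  · -- fwd maps into target
    rintro ⟨r, m⟩ hp
    simp only [Finset.mem_sigma, Finset.mem_range, Finset.mem_filter, Finset.mem_piAntidiag] at hp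
    obtain ⟨hr, ⟨hsum, -⟩, hcond⟩ := hp
    have hle : ∀ i : Fin n, m i ≤ j.1 + 1 := by
      intro i
      have h1 : (i.1 + 1) * m i ≤ j.1 + 1 := hcond ▸ Finset.single_le_sum
        (f := fun i : Fin n => (i.1 + 1) * m i) (fun _ _ => Nat.zero_le _) (Finset.mem_univ i)
      have h2 : m i ≤ (i.1 + 1) * m i := Nat.le_mul_of_pos_left _ (by omega)
      omega
    have hzero : ∀ i : Fin n, j.1 + 1 ≤ i.1 → m i = 0 := by
      intro i hi
      have h1 : (i.1 + 1) * m i ≤ j.1 + 1 := hcond ▸ Finset.single_le_sum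
        (f := fun i : Fin n => (i.1 + 1) * m i) (fun _ _ => Nat.zero_le _) (Finset.mem_univ i)
      by_contra h0
      have : i.1 + 1 ≤ (i.1 + 1) * m i := Nat.le_mul_of_pos_right _ (by omega)
      omega
    simp only [Finset.mem_filter, Finset.mem_univ, true_and]
    have := restrict_sum hjn (fun i : Fin n => (i.1 + 1) * m i)
      (fun i hi => by rw [hzero i hi, mul_zero])
    calc ∑ i : Fin (j.1 + 1), (i.1 + 1) * min (m (Fin.castLE hjn i)) (j.1 + 1)
        = ∑ i : Fin (j.1 + 1), ((Fin.castLE hjn i).1 + 1) * m (Fin.castLE hjn i) := by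
          refine Finset.sum_congr rfl fun i _ => ?_
          rw [min_eq_left (hle _)]; rfl
      _ = ∑ i : Fin n, (i.1 + 1) * m i := this.symm
      _ = j.1 + 1 := hcond
  · -- bwd maps into source
    intro l hl
    simp only [Finset.mem_filter, Finset.mem_univ, true_and] at hl
    have hT1 : 1 ≤ ∑ i, (l i).1 := by
      by_contra h0
      have h1 : ∀ i ∈ (univ : Finset (Fin (j.1 + 1))), (l i).1 = 0 :=
        Finset.sum_eq_zero_iff.1 (by omega)
      rw [Finset.sum_congr rfl (fun i hi => by rw [h1 i hi, mul_zero])] at hl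
      simp at hl
    have hTn : ∑ i, (l i).1 ≤ j.1 + 1 := by
      calc ∑ i, (l i).1 ≤ ∑ i : Fin (j.1 + 1), (i.1 + 1) * (l i).1 :=
            Finset.sum_le_sum fun i _ => Nat.le_mul_of_pos_left _ (by omega)
        _ = j.1 + 1 := hl
    simp only [Finset.mem_sigma, Finset.mem_range, Finset.mem_filter, Finset.mem_piAntidiag]
    have hrs := restrict_sum hjn
      (fun i : Fin n => if h : i.1 < j.1 + 1 then (l ⟨i.1, h⟩).1 else 0)
      (fun i hi => by rw [dif_neg (by omega)])
    have hrs2 := restrict_sum hjn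
      (fun i : Fin n => (i.1 + 1) * if h : i.1 < j.1 + 1 then (l ⟨i.1, h⟩).1 else 0)
      (fun i hi => by rw [dif_neg (by omega), mul_zero])
    have e1 : ∑ i : Fin n, (if h : i.1 < j.1 + 1 then (l ⟨i.1, h⟩).1 else 0) = ∑ i, (l i).1 := by
      rw [hrs]
      refine Finset.sum_congr rfl fun i _ => ?_
      rw [dif_pos (show ((Fin.castLE hjn i) : Fin n).1 < j.1 + 1 from i.2)]
      rfl
    have e2 : ∑ i : Fin n, ((i.1 + 1) * if h : i.1 < j.1 + 1 then (l ⟨i.1, h⟩).1 else 0)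
        = j.1 + 1 := by
      rw [hrs2]
      refine Eq.trans (Finset.sum_congr rfl fun i _ => ?_) hl
      rw [dif_pos (show ((Fin.castLE hjn i) : Fin n).1 < j.1 + 1 from i.2)]
      rfl
    exact ⟨by omega, ⟨by rw [e1]; omega, fun _ _ => Finset.mem_univ _⟩, e2⟩
  · -- left inverse
    rintro ⟨r, m⟩ hp
    simp only [Finset.mem_sigma, Finset.mem_range, Finset.mem_filter, Finset.mem_piAntidiag] at hp
    obtain ⟨hr, ⟨hsum, -⟩, hcond⟩ := hp
    have hle : ∀ i : Fin n, m i ≤ j.1 + 1 := by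
      intro i
      have h1 : (i.1 + 1) * m i ≤ j.1 + 1 := hcond ▸ Finset.single_le_sum
        (f := fun i : Fin n => (i.1 + 1) * m i) (fun _ _ => Nat.zero_le _) (Finset.mem_univ i)
      have h2 : m i ≤ (i.1 + 1) * m i := Nat.le_mul_of_pos_left _ (by omega)
      omega
    have hzero : ∀ i : Fin n, j.1 + 1 ≤ i.1 → m i = 0 := by
      intro i hi
      have h1 : (i.1 + 1) * m i ≤ j.1 + 1 := hcond ▸ Finset.single_le_sum
        (f := fun i : Fin n => (i.1 + 1) * m i) (fun _ _ => Nat.zero_le _) (Finset.mem_univ i)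
      by_contra h0
      have : i.1 + 1 ≤ (i.1 + 1) * m i := Nat.le_mul_of_pos_right _ (by omega)
      omega
    have hS : ∑ i : Fin (j.1 + 1), min (m (Fin.castLE hjn i)) (j.1 + 1) = r + 1 := by
      have := restrict_sum hjn m hzero
      calc ∑ i : Fin (j.1 + 1), min (m (Fin.castLE hjn i)) (j.1 + 1)
          = ∑ i : Fin (j.1 + 1), m (Fin.castLE hjn i) :=
            Finset.sum_congr rfl fun i _ => min_eq_left (hle _)
        _ = ∑ i : Fin n, m i := this.symm
        _ = r + 1 := hsum
    refine Sigma.ext (by dsimp only; omega) (heq_of_eq ?_)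
    funext i
    dsimp only
    by_cases h : i.1 < j.1 + 1
    · rw [dif_pos h]
      show min (m i) (j.1 + 1) = m i
      exact min_eq_left (hle i)
    · rw [dif_neg h]
      exact (hzero i (by omega)).symm
  · -- right inverse
    intro l hl
    funext i
    ext
    dsimp only
    rw [dif_pos (show ((Fin.castLE hjn i) : Fin n).1 < j.1 + 1 from i.2)]
    have h2 : (l i).1 < j.1 + 2 := (l i).2
    show min (l i).1 (j.1 + 1) = (l i).1
    omega
  · -- values agree
    rintro ⟨r, m⟩ hp
    simp only [Finset.mem_sigma, Finset.mem_range, Finset.mem_filter, Finset.mem_piAntidiag] at hp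
    obtain ⟨hr, ⟨hsum, -⟩, hcond⟩ := hp
    have hle : ∀ i : Fin n, m i ≤ j.1 + 1 := by
      intro i
      have h1 : (i.1 + 1) * m i ≤ j.1 + 1 := hcond ▸ Finset.single_le_sum
        (f := fun i : Fin n => (i.1 + 1) * m i) (fun _ _ => Nat.zero_le _) (Finset.mem_univ i)
      have h2 : m i ≤ (i.1 + 1) * m i := Nat.le_mul_of_pos_left _ (by omega)
      omega
    have hzero : ∀ i : Fin n, j.1 + 1 ≤ i.1 → m i = 0 := by
      intro i hi
      have h1 : (i.1 + 1) * m i ≤ j.1 + 1 := hcond ▸ Finset.single_le_sum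
        (f := fun i : Fin n => (i.1 + 1) * m i) (fun _ _ => Nat.zero_le _) (Finset.mem_univ i)
      by_contra h0
      have : i.1 + 1 ≤ (i.1 + 1) * m i := Nat.le_mul_of_pos_right _ (by omega)
      omega
    -- sum of exponents
    have hS : ∑ i : Fin (j.1 + 1), min (m (Fin.castLE hjn i)) (j.1 + 1) = r + 1 := by
      have := restrict_sum hjn m hzero
      calc ∑ i : Fin (j.1 + 1), min (m (Fin.castLE hjn i)) (j.1 + 1)
          = ∑ i : Fin (j.1 + 1), m (Fin.castLE hjn i) :=
            Finset.sum_congr rfl fun i _ => min_eq_left (hle _)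
        _ = ∑ i : Fin n, m i := this.symm
        _ = r + 1 := hsum
    -- product of monomials
    have hP : ∏ i : Fin (j.1 + 1), (X (⟨i.1, by omega⟩ : Fin n) : MvPolynomial (Fin n) k)
          ^ min (m (Fin.castLE hjn i)) (j.1 + 1)
        = ∏ i : Fin n, (X i : MvPolynomial (Fin n) k) ^ m i := by
      have := restrict_prod hjn (fun i : Fin n => (X i : MvPolynomial (Fin n) k) ^ m i)
        (fun i hi => by rw [hzero i hi, pow_zero])
      rw [this]
      refine Finset.prod_congr rfl fun i _ => ?_
      rw [min_eq_left (hle _)]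
      congr 1
    -- product of factorials
    have hF : ∏ i : Fin (j.1 + 1), (min (m (Fin.castLE hjn i)) (j.1 + 1)).factorial
        = ∏ i : Fin n, (m i).factorial := by
      have := restrict_prod hjn (fun i : Fin n => (m i).factorial)
        (fun i hi => by rw [hzero i hi]; rfl)
      rw [this]
      exact Finset.prod_congr rfl fun i _ => by rw [min_eq_left (hle _)]
    -- multinomial cast
    have hmult : ((Nat.multinomial univ m : ℕ) : k)
        = ((r + 1).factorial : k) / (∏ i : Fin n, ((m i).factorial : k)) := by
      have hspec := Nat.multinomial_spec univ m
      rw [hsum] at hspec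
      have hne : (∏ i : Fin n, ((m i).factorial : k)) ≠ 0 := by
        rw [← Nat.cast_prod]
        exact Nat.cast_ne_zero.2 (Finset.prod_ne_zero_iff.2
          fun i _ => (Nat.factorial_pos _).ne')
      rw [eq_div_iff hne]
      have hspec' : Nat.multinomial univ m * ∏ i : Fin n, (m i).factorial
          = (r + 1).factorial := by rw [mul_comm]; exact hspec
      exact_mod_cast hspec'
    have hFk : (∏ i : Fin (j.1 + 1), ((min (m (Fin.castLE hjn i)) (j.1 + 1)).factorial : k))
        = ∏ i : Fin n, ((m i).factorial : k) := by
      exact_mod_cast congrArg (fun t : ℕ => (t : k)) hF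
    dsimp only
    rw [hS, hFk, hP]
    rw [show ((Nat.multinomial univ m : ℕ) : MvPolynomial (Fin n) k)
        = C ((Nat.multinomial univ m : ℕ) : k) from by push_cast; rfl]
    rw [hmult, ← mul_assoc, ← map_mul, mul_comm (a (r + 1))]

end Helpers2

/-- `α` is a group homomorphism from the group of truncated power series
`∑_{r=1}^n a_r x^r` (`a₁ ≠ 0`) under composition-mod-`x^{n+1}` to polynomial self-maps of
affine `n`-space under composition: if `F_c ≡ F_a ∘ F_b mod x^{n+1}` then
`α(c) = α(a) ∘ α(b)` (composition of the polynomial maps, expressed on coordinates by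
substituting the coordinates of `α(b)` into those of `α(a)`). -/
theorem stmt14 (k : Type*) [Field k] [CharZero k] (n : ℕ) (hn : 1 ≤ n)
    (a b c : ℕ → k) (ha : a 1 ≠ 0) (hb : b 1 ≠ 0)
    (hc : ∀ r ≤ n, Polynomial.coeff (Ftrunc n c) r =
      Polynomial.coeff ((Ftrunc n a).comp (Ftrunc n b)) r) :
    ∀ j : Fin n,
      MvPolynomial.aeval (alphaPoly n b) (alphaPoly n a j) = alphaPoly n c j := by
  intro j
  classical
  have hjn : j.1 + 1 ≤ n := j.2
  set Y := Ypoly k n with hY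
  set φ : MvPolynomial (Fin n) k →ₐ[k] MvPolynomial (Fin n) k :=
    MvPolynomial.aeval (alphaPoly n b) with hφ
  set Gb := Polynomial.aeval Y (Ftrunc n b) with hGb
  set Y' := Polynomial.map (φ : MvPolynomial (Fin n) k →+* MvPolynomial (Fin n) k) Y with hY'
  have s1 : MvPolynomial.aeval (alphaPoly n b) (alphaPoly n a j)
      = (Polynomial.map (φ : MvPolynomial (Fin n) k →+* MvPolynomial (Fin n) k)
          (Polynomial.aeval Y (Ftrunc n a))).coeff (j.1 + 1) := by
    rw [Polynomial.coeff_map, ← coeff_aeval_Y k n a j]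
    rfl
  have s2 : Polynomial.map (φ : MvPolynomial (Fin n) k →+* MvPolynomial (Fin n) k)
        (Polynomial.aeval Y (Ftrunc n a))
      = Polynomial.aeval Y' (Ftrunc n a) := by
    have h := Polynomial.aeval_algHom_apply (Polynomial.mapAlgHom φ) Y (Ftrunc n a)
    simpa [Polynomial.mapAlgHom] using h.symm
  have hXdvdY : Polynomial.X ∣ Y := Polynomial.X_dvd_iff.2 (Ypoly_coeff_zero k n)
  have hGb0 : Gb.coeff 0 = 0 := by
    have : Polynomial.X ∣ Gb := by
      rw [hGb, Ftrunc, map_sum]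
      refine Finset.dvd_sum fun r _ => ?_
      rw [map_mul, map_pow, Polynomial.aeval_X]
      exact Dvd.dvd.mul_left (hXdvdY.trans (dvd_pow_self Y (Nat.succ_ne_zero r))) _
    exact Polynomial.X_dvd_iff.1 this
  have hY'eq : Y' = ∑ i : Fin n, Polynomial.C (alphaPoly n b i) * Polynomial.X ^ (i.1 + 1) := by
    rw [hY', hY, Ypoly, Polynomial.map_sum]
    refine Finset.sum_congr rfl fun i _ => ?_
    rw [Polynomial.map_mul, Polynomial.map_pow, Polynomial.map_X, Polynomial.map_C]
    congr 1
    simp [hφ]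
  have hY'coeff : ∀ d ≤ n, Y'.coeff d = Gb.coeff d := by
    intro d hd
    rcases Nat.eq_zero_or_pos d with hd0 | hd1
    · subst hd0
      rw [hGb0, hY'eq, Polynomial.finset_sum_coeff]
      refine Finset.sum_eq_zero fun i _ => ?_
      rw [Polynomial.coeff_C_mul, Polynomial.coeff_X_pow, if_neg (by omega), mul_zero]
    · have hd1n : d - 1 < n := by omega
      rw [show d = (d - 1) + 1 by omega] at hd ⊢
      rw [hY'eq, Polynomial.finset_sum_coeff]
      have hterm : ∀ i : Fin n,
          (Polynomial.C (alphaPoly n b i) * Polynomial.X ^ (i.1 + 1)).coeff ((d - 1) + 1)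
          = if i = ⟨d - 1, hd1n⟩ then alphaPoly n b ⟨d - 1, hd1n⟩ else 0 := by
        intro i
        rw [Polynomial.coeff_C_mul, Polynomial.coeff_X_pow]
        by_cases hi : i = ⟨d - 1, hd1n⟩
        · subst hi
          rw [if_pos rfl, if_pos rfl, mul_one]
        · rw [if_neg (fun hdi => hi (by ext; show i.1 = d - 1; omega)), mul_zero, if_neg hi]
      rw [Finset.sum_congr rfl fun i _ => hterm i, Finset.sum_ite_eq' Finset.univ]
      rw [if_pos (Finset.mem_univ _)]
      exact (coeff_aeval_Y k n b ⟨d - 1, hd1n⟩).symm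
  have hdvd : Polynomial.X ^ (n + 1) ∣ Y' - Gb :=
    Polynomial.X_pow_dvd_iff.2 fun d hd => by
      rw [Polynomial.coeff_sub, hY'coeff d (by omega), sub_self]
  have s3 : (Polynomial.aeval Y' (Ftrunc n a)).coeff (j.1 + 1)
      = (Polynomial.aeval Gb (Ftrunc n a)).coeff (j.1 + 1) := by
    have h1 : Polynomial.X ^ (n + 1) ∣
        Polynomial.aeval Y' (Ftrunc n a) - Polynomial.aeval Gb (Ftrunc n a) :=
      hdvd.trans (aeval_sub_dvd Y' Gb (Ftrunc n a))
    have h2 := Polynomial.X_pow_dvd_iff.1 h1 (j.1 + 1) (by omega)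
    rw [Polynomial.coeff_sub] at h2
    exact sub_eq_zero.1 h2
  have s4 : Polynomial.aeval Gb (Ftrunc n a)
      = Polynomial.aeval Y ((Ftrunc n a).comp (Ftrunc n b)) :=
    (Polynomial.aeval_comp Y).symm
  have hdvd2 : Polynomial.X ^ (n + 1) ∣ (Ftrunc n a).comp (Ftrunc n b) - Ftrunc n c :=
    Polynomial.X_pow_dvd_iff.2 fun d hd => by
      rw [Polynomial.coeff_sub, ← hc d (by omega), sub_self]
  have s5 : (Polynomial.aeval Y ((Ftrunc n a).comp (Ftrunc n b))).coeff (j.1 + 1)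
      = (Polynomial.aeval Y (Ftrunc n c)).coeff (j.1 + 1) := by
    obtain ⟨H, hH⟩ := hdvd2
    have h2 : Polynomial.X ^ (n + 1) ∣
        Polynomial.aeval Y ((Ftrunc n a).comp (Ftrunc n b)) - Polynomial.aeval Y (Ftrunc n c) := by
      rw [← map_sub, hH, map_mul, map_pow, Polynomial.aeval_X]
      exact Dvd.dvd.mul_right (pow_dvd_pow_of_dvd hXdvdY (n + 1)) _
    have h3 := Polynomial.X_pow_dvd_iff.1 h2 (j.1 + 1) (by omega)
    rw [Polynomial.coeff_sub] at h3
    exact sub_eq_zero.1 h3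
  rw [s1, s2, s3, s4, s5, coeff_aeval_Y k n c j]
end
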